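/- For every integer k ≥ 2 and every real λ > 0: if the median of the Poisson distribution of order k with parameter λ is zero (equivalently, if f_k(0;λ) ≥ 1/2), then its mode is uniquely zero, i.e. f_k(n;λ) < f_k(0;λ) for every integer n ≥ 1. -/
import Mathlib


/-- Scaled pmf of the Poisson distribution of order `k`:
`h_k(n;λ) = Σ λ^(n₁+⋯+n_k)/(n₁!⋯n_k!)`, summed over all `k`-tuples `(n₁,…,n_k)`
of nonnegative integers with `n₁ + 2n₂ + ⋯ + k·n_k = n`.
(Each `n_i` is at most `n` whenever the constraint holds, so the range is exhaustive.) -/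
noncomputable def poissonOrderH (k n : ℕ) (lam : ℝ) : ℝ :=
  ∑ t ∈ (Fintype.piFinset fun _ : Fin k => Finset.range (n + 1)) |>.filter
      (fun t => ∑ i : Fin k, ((i : ℕ) + 1) * t i = n),
    lam ^ (∑ i : Fin k, t i) / ∏ i : Fin k, (Nat.factorial (t i) : ℝ)

/-- Pmf of the Poisson distribution of order `k`: `f_k(n;λ) = e^{-kλ} h_k(n;λ)`. -/
noncomputable def poissonOrderPmf (k n : ℕ) (lam : ℝ) : ℝ :=
  Real.exp (-(k * lam)) * poissonOrderH k n lam

lemma poissonOrderH_zero (k : ℕ) (lam : ℝ) : poissonOrderH k 0 lam = 1 := by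
  unfold poissonOrderH
  have hset : ((Fintype.piFinset fun _ : Fin k => Finset.range (0 + 1)) |>.filter
      (fun t => ∑ i : Fin k, ((i : ℕ) + 1) * t i = 0)) = {fun _ => 0} := by
    ext t
    simp only [Finset.mem_filter, Fintype.mem_piFinset, Finset.mem_range, Nat.lt_one_iff,
      Finset.mem_singleton, funext_iff]
    constructor
    · intro h i
      have := h.1 i
      omega
    · intro h
      exact ⟨fun i => by have := h i; omega, by simp [h]⟩
  rw [hset]
  simp

theorem stmt_9 (k : ℕ) (hk : 2 ≤ k) (lam : ℝ) (hlam : 0 < lam)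
    (hmed : (1 : ℝ) / 2 ≤ poissonOrderPmf k 0 lam) :
    ∀ n : ℕ, 1 ≤ n → poissonOrderPmf k n lam < poissonOrderPmf k 0 lam := by
  intro n hn
  have hf0 : poissonOrderPmf k 0 lam = Real.exp (-(k * lam)) := by
    rw [poissonOrderPmf, poissonOrderH_zero, mul_one]
  set E := Real.exp (-(k * lam)) with hEdef
  have hEpos : 0 < E := Real.exp_pos _
  have hmed' : (1 : ℝ) / 2 ≤ E := hf0 ▸ hmed
  -- the partial exponential sum
  set S := ∑ j ∈ Finset.range (n + 1), lam ^ j / (Nat.factorial j : ℝ) with hSdef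
  have hSnonneg : 0 ≤ S := by
    apply Finset.sum_nonneg
    intro j _
    positivity
  have hSlt : S < Real.exp lam := by
    have h1 := Real.sum_le_exp_of_nonneg hlam.le (n + 2)
    rw [Finset.sum_range_succ] at h1
    have h2 : 0 < lam ^ (n + 1) / (Nat.factorial (n + 1) : ℝ) := by positivity
    linarith
  -- full unconstrained sum over piFinset equals S ^ k
  have htot : ∑ t ∈ Fintype.piFinset (fun _ : Fin k => Finset.range (n + 1)),
      lam ^ (∑ i : Fin k, t i) / ∏ i : Fin k, (Nat.factorial (t i) : ℝ) = S ^ k := by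
    have h := Finset.sum_prod_piFinset (Finset.range (n + 1))
      (fun (_ : Fin k) (j : ℕ) => lam ^ j / (Nat.factorial j : ℝ))
    calc ∑ t ∈ Fintype.piFinset (fun _ : Fin k => Finset.range (n + 1)),
          lam ^ (∑ i : Fin k, t i) / ∏ i : Fin k, (Nat.factorial (t i) : ℝ)
        = ∑ t ∈ Fintype.piFinset (fun _ : Fin k => Finset.range (n + 1)),
          ∏ i : Fin k, (lam ^ (t i) / (Nat.factorial (t i) : ℝ)) := by
          apply Finset.sum_congr rfl
          intro t _
          rw [Finset.prod_div_distrib, Finset.prod_pow_eq_pow_sum]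
      _ = ∏ _i : Fin k, S := h
      _ = S ^ k := by rw [Finset.prod_const, Finset.card_univ, Fintype.card_fin]
  -- bound the constrained sum
  have hzmem : (fun _ : Fin k => 0) ∈ Fintype.piFinset (fun _ : Fin k => Finset.range (n + 1)) := by
    simp
  have hbound : poissonOrderH k n lam ≤ S ^ k - 1 := by
    unfold poissonOrderH
    have hsub : ((Fintype.piFinset fun _ : Fin k => Finset.range (n + 1)) |>.filter
        (fun t => ∑ i : Fin k, ((i : ℕ) + 1) * t i = n)) ⊆
        (Fintype.piFinset fun _ : Fin k => Finset.range (n + 1)).erase (fun _ : Fin k => (0 : ℕ)) := by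
      intro t ht
      rw [Finset.mem_filter] at ht
      rw [Finset.mem_erase]
      refine ⟨?_, ht.1⟩
      intro hcontra
      rw [hcontra] at ht
      simp at ht
      omega
    refine le_trans (Finset.sum_le_sum_of_subset_of_nonneg hsub fun t _ _ =>
      div_nonneg (pow_nonneg hlam.le _)
        (Finset.prod_nonneg fun i _ => Nat.cast_nonneg _)) ?_
    have herase := Finset.add_sum_erase (Fintype.piFinset fun _ : Fin k => Finset.range (n + 1))
      (fun t : Fin k → ℕ => lam ^ (∑ i : Fin k, t i) / ∏ i : Fin k, (Nat.factorial (t i) : ℝ))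
      hzmem
    have hz : lam ^ (∑ i : Fin k, (0 : ℕ)) / ∏ i : Fin k, (Nat.factorial 0 : ℝ) = 1 := by simp
    rw [htot] at herase
    simp only [hz] at herase
    linarith
  have hpow : S ^ k < Real.exp (k * lam) := by
    have := pow_lt_pow_left₀ hSlt hSnonneg (by omega : k ≠ 0)
    rwa [Real.exp_nat_mul] at *
  have hEexp : E * Real.exp (k * lam) = 1 := by
    rw [hEdef, ← Real.exp_add]
    simp
  have hfn : poissonOrderPmf k n lam < E * (Real.exp (k * lam) - 1) := by
    rw [poissonOrderPmf]
    apply mul_lt_mul_of_pos_left _ hEpos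
    linarith
  rw [hf0]
  nlinarith
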